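/- There exists a locally univalent meromorphic function on the unit disc whose image is the entire extended complex plane (Riemann sphere). -/

import Mathlib

open Metric

/-! ### Auxiliary constructions

We build a locally univalent meromorphic surjection `D → ℂ∪{∞}` as `w = (2 + p³)/(2p)`
where `p z = -4^(1/3) · z · (1 - z³)^(-2/3)` (principal branch), so that `p` maps the unit
disc onto `{t : t³ ∉ [1,∞)}` with nonvanishing derivative, avoiding the cube roots of
unity (the critical points of `t ↦ (2 + t³)/(2t)`). -/

noncomputable def kk : ℂ := Complex.exp (Complex.log 4 / 3)

lemma kk_ne : kk ≠ 0 := Complex.exp_ne_zero _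

lemma kk_cube : kk ^ 3 = 4 := by
  have h : ((3:ℕ):ℂ) * (Complex.log 4 / 3) = Complex.log 4 := by push_cast; ring
  rw [kk, ← Complex.exp_nat_mul, h, Complex.exp_log (by norm_num)]

noncomputable def EE (z : ℂ) : ℂ := Complex.exp (-(2/3 : ℂ) * Complex.log (1 - z^3))

noncomputable def pp (z : ℂ) : ℂ := (-kk) * z * EE z

noncomputable def DD (z : ℂ) : ℂ := (-kk) * EE z * ((1 + z^3)/(1 - z^3))

lemma cube_lt {z : ℂ} (hz : ‖z‖ < 1) : ‖z^3‖ < 1 := by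
  rw [norm_pow]; exact pow_lt_one₀ (norm_nonneg z) hz (by norm_num)

lemma one_sub_mem {w : ℂ} (hw : ‖w‖ < 1) : (1 - w) ∈ Complex.slitPlane := by
  rw [Complex.mem_slitPlane_iff]; left
  have h1 : w.re ≤ ‖w‖ := by simpa using Complex.re_le_norm w
  simp only [Complex.sub_re, Complex.one_re]; linarith

lemma one_sub_ne {w : ℂ} (hw : ‖w‖ < 1) : (1:ℂ) - w ≠ 0 :=
  Complex.slitPlane_ne_zero (one_sub_mem hw)

lemma one_add_ne {w : ℂ} (hw : ‖w‖ < 1) : (1:ℂ) + w ≠ 0 := by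
  intro h
  have : w = -1 := by linear_combination h
  rw [this] at hw; simp at hw

lemma EE_cube {z : ℂ} (h : (1:ℂ) - z^3 ≠ 0) : (EE z)^3 * (1 - z^3)^2 = 1 := by
  have h1 : (EE z)^3 = Complex.exp (-(2 * Complex.log (1 - z^3))) := by
    rw [EE, ← Complex.exp_nat_mul]; congr 1; push_cast; ring
  have h2 : Complex.exp ((2:ℂ) * Complex.log (1 - z^3)) = (1 - z^3)^2 := by
    have h3 : ((2:ℕ):ℂ) * Complex.log (1-z^3) = (2:ℂ) * Complex.log (1-z^3) := by
      push_cast; ring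
    rw [← h3, Complex.exp_nat_mul, Complex.exp_log h]
  rw [h1, Complex.exp_neg, h2]
  field_simp

lemma pp_cube {z : ℂ} (h : (1:ℂ) - z^3 ≠ 0) : (pp z)^3 * (1 - z^3)^2 = -4 * z^3 := by
  have h1 : (pp z)^3 * (1 - z^3)^2 = -(kk^3) * z^3 * ((EE z)^3 * (1 - z^3)^2) := by
    rw [pp]; ring
  rw [h1, EE_cube h, kk_cube]; ring

lemma hasDerivAt_pp {z : ℂ} (hz : ‖z‖ < 1) : HasDerivAt pp (DD z) z := by
  have hc := cube_lt hz
  have hmem : (1 - z^3) ∈ Complex.slitPlane := one_sub_mem hc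
  have hne : (1:ℂ) - z^3 ≠ 0 := one_sub_ne hc
  have h1 : HasDerivAt (fun z : ℂ => 1 - z^3) (-(3 * z^2)) z := by
    simpa using (hasDerivAt_pow 3 z).const_sub 1
  have h2 : HasDerivAt (fun z : ℂ => Complex.log (1 - z^3)) ((1 - z^3)⁻¹ * -(3*z^2)) z :=
    by have := (Complex.hasDerivAt_log hmem).comp z h1; exact this
  have h3 := h2.const_mul (-(2/3 : ℂ))
  have h4 := h3.cexp
  have h5 : HasDerivAt (fun y : ℂ => (-kk) * y) (-kk) z := by
    simpa using (hasDerivAt_id z).const_mul (-kk)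
  have h6 := h5.mul h4
  have h7 : HasDerivAt pp
      ((-kk) * Complex.exp (-(2/3:ℂ) * Complex.log (1 - z^3)) +
        (-kk) * z * (Complex.exp (-(2/3:ℂ) * Complex.log (1 - z^3)) *
          (-(2/3:ℂ) * ((1 - z^3)⁻¹ * -(3*z^2))))) z := h6
  have h8 : DD z = (-kk) * Complex.exp (-(2/3:ℂ) * Complex.log (1 - z^3)) +
        (-kk) * z * (Complex.exp (-(2/3:ℂ) * Complex.log (1 - z^3)) *
          (-(2/3:ℂ) * ((1 - z^3)⁻¹ * -(3*z^2)))) := by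
    rw [DD, EE]; field_simp; ring
  rw [h8]; exact h7

/-- A primitive cube root of unity. -/
noncomputable def om : ℂ := (-1 + Real.sqrt 3 * Complex.I)/2

lemma om_quad : om^2 + om + 1 = 0 := by
  have h3 : ((Real.sqrt 3 : ℝ) : ℂ)^2 = 3 := by
    rw [← Complex.ofReal_pow, Real.sq_sqrt (by norm_num : (3:ℝ) ≥ 0)]; norm_num
  rw [om]; linear_combination (1/4 : ℂ) * Complex.I^2 * h3 + (3/4 : ℂ) * Complex.I_sq

lemma om_cube : om^3 = 1 := by linear_combination (om - 1) * om_quad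

lemma om_norm : ‖om‖ = 1 := by
  have h : ‖om‖^3 = 1 := by rw [← norm_pow, om_cube, norm_one]
  nlinarith [norm_nonneg om, sq_nonneg (‖om‖ - 1), sq_nonneg (‖om‖ + 1)]

lemma cube_eq {x t : ℂ} (h : x^3 = t^3) : x = t ∨ x = om * t ∨ x = om^2 * t := by
  have key : (x - t) * ((x - om*t) * (x - om^2*t)) = 0 := by
    linear_combination h + (-t*x^2 + om*t^2*x - (om - 1)*t^3) * om_quad
  rcases mul_eq_zero.1 key with h1 | h2
  · left; linear_combination h1
  rcases mul_eq_zero.1 h2 with h1 | h1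
  · right; left; linear_combination h1
  · right; right; linear_combination h1

lemma pp_rot (z : ℂ) : pp (om * z) = om * pp z := by
  have h : (om * z)^3 = z^3 := by rw [mul_pow, om_cube, one_mul]
  rw [pp, pp, EE, EE, h]; ring

/-- If `s` is not a real number `≥ 1`, then the Koebe equation `s(1-w)² = -4w` has a
solution in the open unit disc. -/
lemma exists_w (s : ℂ) (hs : ∀ r : ℝ, 1 ≤ r → s ≠ (r:ℂ)) :
    ∃ w : ℂ, ‖w‖ < 1 ∧ s * (1 - w)^2 = -4 * w := by
  have key : ∀ w : ℂ, s * (1 - w)^2 = -4 * w → ‖w‖ = 1 → False := by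
    intro w heq hw
    have hB : w * (starRingEnd ℂ) w = 1 := by
      rw [Complex.mul_conj, Complex.normSq_eq_norm_sq, hw]
      norm_num
    have hC : w + (starRingEnd ℂ) w = 2 * (w.re : ℂ) := by
      rw [Complex.add_conj]; push_cast; ring
    have h2 : s * (w + (starRingEnd ℂ) w - 2) = -4 := by
      linear_combination ((starRingEnd ℂ) w) * heq + (2*s - s*w - 4) * hB
    have hkey : s * ((2 * w.re - 2 : ℝ) : ℂ) = -4 := by
      push_cast
      linear_combination h2 - s * hC
    have hre : w.re < 1 := by
      rcases lt_or_ge w.re 1 with h | h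
      · exact h
      · exfalso
        have h1 : w.re ≤ ‖w‖ := by simpa using Complex.re_le_norm w
        have hre1 : w.re = 1 := le_antisymm (hw ▸ h1) h
        rw [hre1] at hkey; norm_num at hkey
    have hrege : -1 ≤ w.re := by
      have h1 := Complex.abs_re_le_norm w
      rw [hw] at h1
      cases' abs_le.1 h1 with h _; exact h
    have hden : (2 * w.re - 2 : ℝ) ≠ 0 := by linarith
    have hden' : ((2 * w.re - 2 : ℝ) : ℂ) ≠ 0 := Complex.ofReal_ne_zero.2 hden
    have hs_eq : s = ((-4 / (2 * w.re - 2) : ℝ) : ℂ) := by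
      rw [Complex.ofReal_div, eq_div_iff hden']
      push_cast
      push_cast at hkey
      linear_combination hkey
    have hge : 1 ≤ (-4 / (2 * w.re - 2) : ℝ) := by
      rw [le_div_iff_of_neg (by linarith : (2 * w.re - 2 : ℝ) < 0)]
      linarith
    exact hs _ hge hs_eq
  by_cases hs0 : s = 0
  · exact ⟨0, by norm_num, by rw [hs0]; ring⟩
  obtain ⟨d, hd⟩ := IsAlgClosed.exists_pow_nat_eq (1 - s) (n := 2) (by norm_num)
  have e₁ : s * (1 - (s - 2 + 2*d)/s)^2 = -4 * ((s - 2 + 2*d)/s) := by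
    field_simp
    linear_combination 4 * hd
  have e₂ : s * (1 - (s - 2 - 2*d)/s)^2 = -4 * ((s - 2 - 2*d)/s) := by
    field_simp
    linear_combination 4 * hd
  have eprod : ((s - 2 + 2*d)/s) * ((s - 2 - 2*d)/s) = 1 := by
    field_simp
    linear_combination (-4 : ℂ) * hd
  have hn : ‖(s - 2 + 2*d)/s‖ * ‖(s - 2 - 2*d)/s‖ = 1 := by
    rw [← norm_mul, eprod, norm_one]
  rcases le_total ‖(s - 2 + 2*d)/s‖ 1 with h | h
  · exact ⟨_, lt_of_le_of_ne h (fun heq1 => key _ e₁ heq1), e₁⟩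
  · have h2 : ‖(s - 2 - 2*d)/s‖ ≤ 1 := by nlinarith [norm_nonneg ((s - 2 - 2*d)/s)]
    exact ⟨_, lt_of_le_of_ne h2 (fun heq1 => key _ e₂ heq1), e₂⟩

lemma exists_cubic_root (c : ℂ) : ∃ t : ℂ, t^3 - 2*c*t + 2 = 0 := by
  by_cases hc : c = 0
  · obtain ⟨u, hu⟩ := IsAlgClosed.exists_pow_nat_eq (-2 : ℂ) (n := 3) (by norm_num)
    refine ⟨u, ?_⟩
    rw [hc]; linear_combination hu
  · obtain ⟨d, hd⟩ := IsAlgClosed.exists_pow_nat_eq (1 - 8*c^3/27 : ℂ) (n := 2) (by norm_num)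
    have hv : (-1 + d)^2 + 2*(-1 + d) + 8*c^3/27 = 0 := by linear_combination hd
    have hvne : (-1 + d : ℂ) ≠ 0 := by
      intro h
      rw [show d = (1:ℂ) by linear_combination h] at hd
      have h3 : c^3 = 0 := by linear_combination (27/8 : ℂ) * hd
      exact hc ((pow_eq_zero_iff (by norm_num : (3:ℕ) ≠ 0)).1 h3)
    obtain ⟨u, hu⟩ := IsAlgClosed.exists_pow_nat_eq (-1 + d : ℂ) (n := 3) (by norm_num)
    have hune : u ≠ 0 := by
      intro h; rw [h] at hu; simp at hu; exact hvne hu.symm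
    refine ⟨u + 2*c/(3*u), ?_⟩
    have h6 : (u^3)^2 + 2*u^3 + 8*c^3/27 = 0 := by rw [hu]; linear_combination hv
    field_simp
    linear_combination 27 * h6

/-- Every cubic `t³ - 2ct + 2` has a root whose cube is not a real number `≥ 1`. -/
lemma exists_good_root (c : ℂ) :
    ∃ t : ℂ, t^3 - 2*c*t + 2 = 0 ∧ ∀ r : ℝ, 1 ≤ r → t^3 ≠ (r:ℂ) := by
  obtain ⟨t₁, h₁⟩ := exists_cubic_root c
  by_cases g₁ : ∀ r : ℝ, 1 ≤ r → t₁^3 ≠ (r:ℂ)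
  · exact ⟨t₁, h₁, g₁⟩
  push_neg at g₁
  obtain ⟨r₁, hr₁, e₁⟩ := g₁
  obtain ⟨e, he⟩ := IsAlgClosed.exists_pow_nat_eq (8*c - 3*t₁^2 : ℂ) (n := 2) (by norm_num)
  have hq₂ : ((-t₁ + e)/2)^2 + t₁*((-t₁ + e)/2) + (t₁^2 - 2*c) = 0 := by
    field_simp
    linear_combination he
  have h₂ : ((-t₁ + e)/2)^3 - 2*c*((-t₁ + e)/2) + 2 = 0 := by
    linear_combination h₁ + ((-t₁ + e)/2 - t₁) * hq₂
  by_cases g₂ : ∀ r : ℝ, 1 ≤ r → ((-t₁ + e)/2)^3 ≠ (r:ℂ)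
  · exact ⟨_, h₂, g₂⟩
  push_neg at g₂
  obtain ⟨r₂, hr₂, e₂⟩ := g₂
  have hq₃ : (-t₁ - (-t₁ + e)/2)^2 + t₁*(-t₁ - (-t₁ + e)/2) + (t₁^2 - 2*c) = 0 := by
    linear_combination hq₂
  have h₃ : (-t₁ - (-t₁ + e)/2)^3 - 2*c*(-t₁ - (-t₁ + e)/2) + 2 = 0 := by
    linear_combination h₁ + ((-t₁ - (-t₁ + e)/2) - t₁) * hq₃
  by_cases g₃ : ∀ r : ℝ, 1 ≤ r → (-t₁ - (-t₁ + e)/2)^3 ≠ (r:ℂ)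
  · exact ⟨_, h₃, g₃⟩
  push_neg at g₃
  obtain ⟨r₃, hr₃, e₃⟩ := g₃
  exfalso
  have hprod : t₁ * ((-t₁ + e)/2) * (-t₁ - (-t₁ + e)/2) = -2 := by
    linear_combination (-t₁) * hq₂ + h₁
  have hcube : ((r₁ * r₂ * r₃ : ℝ) : ℂ) = -8 := by
    push_cast
    rw [← e₁, ← e₂, ← e₃]
    linear_combination ((t₁ * ((-t₁ + e)/2) * (-t₁ - (-t₁ + e)/2))^2
      + (t₁ * ((-t₁ + e)/2) * (-t₁ - (-t₁ + e)/2)) * (-2) + 4) * hprod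
  have hreal : (r₁ * r₂ * r₃ : ℝ) = -8 := by exact_mod_cast hcube
  have p1 : (0:ℝ) < r₁ := by linarith
  have p2 : (0:ℝ) < r₂ := by linarith
  have p3 : (0:ℝ) < r₃ := by linarith
  have hpos := mul_pos (mul_pos p1 p2) p3
  linarith

/-- There is a locally univalent meromorphic function on the unit disc onto the extended
complex plane. We represent such a function as a quotient `w = f/g` of holomorphic
functions on the disc whose Wronskian `f g' - f' g` never vanishes (this is exactly local
univalence of the meromorphic map `w : D → ℂ∪{∞}`); surjectivity onto the Riemann sphere
means that every finite value `c` is attained (`f = c·g` at a point where `g ≠ 0`) and the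
value `∞` is attained (`g` has a zero). -/
theorem exists_locally_univalent_meromorphic_onto_sphere :
    ∃ f g : ℂ → ℂ,
      DifferentiableOn ℂ f (ball (0 : ℂ) 1) ∧
      DifferentiableOn ℂ g (ball (0 : ℂ) 1) ∧
      (∀ z ∈ ball (0 : ℂ) 1, f z * deriv g z - deriv f z * g z ≠ 0) ∧
      (∀ c : ℂ, ∃ z ∈ ball (0 : ℂ) 1, g z ≠ 0 ∧ f z = c * g z) ∧
      (∃ z ∈ ball (0 : ℂ) 1, g z = 0) := by
  refine ⟨fun z => 2 + (pp z)^3, fun z => 2 * pp z, ?_, ?_, ?_, ?_, ?_⟩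
  · intro z hz
    rw [mem_ball_zero_iff] at hz
    exact (((hasDerivAt_pp hz).pow 3).const_add 2).differentiableAt.differentiableWithinAt
  · intro z hz
    rw [mem_ball_zero_iff] at hz
    exact ((hasDerivAt_pp hz).const_mul 2).differentiableAt.differentiableWithinAt
  · intro z hz
    rw [mem_ball_zero_iff] at hz
    have hc := cube_lt hz
    have hD := hasDerivAt_pp hz
    have hdf : deriv (fun z => 2 + (pp z)^3) z = ((3:ℕ):ℂ) * (pp z)^2 * DD z := by
      simpa using ((hD.pow 3).const_add 2).deriv
    have hdg : deriv (fun z => 2 * pp z) z = 2 * DD z := (hD.const_mul 2).deriv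
    rw [hdf, hdg]
    have hW : (2 + (pp z)^3) * (2 * DD z) - ((3:ℕ):ℂ) * (pp z)^2 * DD z * (2 * pp z)
        = 4 * DD z * (1 - (pp z)^3) := by push_cast; ring
    rw [hW]
    have hDne : DD z ≠ 0 := by
      rw [DD, EE]
      exact mul_ne_zero (mul_ne_zero (neg_ne_zero.2 kk_ne) (Complex.exp_ne_zero _))
        (div_ne_zero (one_add_ne hc) (one_sub_ne hc))
    refine mul_ne_zero (mul_ne_zero (by norm_num) hDne) ?_
    intro h0
    have hp3 : (pp z)^3 = 1 := by linear_combination -h0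
    have hpc := pp_cube (one_sub_ne hc)
    rw [hp3, one_mul] at hpc
    have hsq : (1 + z^3)^2 = 0 := by linear_combination hpc
    exact one_add_ne hc ((pow_eq_zero_iff (by norm_num : (2:ℕ) ≠ 0)).1 hsq)
  · intro c
    obtain ⟨t, ht, htg⟩ := exists_good_root c
    have ht0 : t ≠ 0 := by intro h; rw [h] at ht; norm_num at ht
    obtain ⟨w, hw, hweq⟩ := exists_w (t^3) htg
    obtain ⟨z₀, hz₀⟩ := IsAlgClosed.exists_pow_nat_eq w (n := 3) (by norm_num)
    have hz₀n : ‖z₀‖ < 1 := by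
      by_contra hcon
      push_neg at hcon
      have h3 : (1:ℝ) ≤ ‖z₀‖^3 := by
        have h4 : (1:ℝ)^3 ≤ ‖z₀‖^3 := pow_le_pow_left₀ (by norm_num) hcon 3
        simpa using h4
      rw [← norm_pow, hz₀] at h3
      linarith
    have hne0 : (1:ℂ) - z₀^3 ≠ 0 := one_sub_ne (cube_lt hz₀n)
    have hcube : (pp z₀)^3 = t^3 := by
      have h1 := pp_cube hne0
      rw [hz₀] at h1
      have h2 : (pp z₀)^3 * (1-w)^2 = t^3 * (1-w)^2 := by rw [h1, ← hweq]
      exact mul_right_cancel₀ (pow_ne_zero 2 (one_sub_ne hw)) h2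
    have main : ∃ z', ‖z'‖ < 1 ∧ pp z' = t := by
      rcases cube_eq hcube with h | h | h
      · exact ⟨z₀, hz₀n, h⟩
      · refine ⟨om*(om*z₀), ?_, ?_⟩
        · rw [norm_mul, norm_mul, om_norm, one_mul, one_mul]; exact hz₀n
        · rw [pp_rot, pp_rot, h]; linear_combination t * om_cube
      · refine ⟨om*z₀, ?_, ?_⟩
        · rw [norm_mul, om_norm, one_mul]; exact hz₀n
        · rw [pp_rot, h]; linear_combination t * om_cube
    obtain ⟨z', hz', hpz⟩ := main
    refine ⟨z', mem_ball_zero_iff.2 hz', ?_, ?_⟩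
    · show 2 * pp z' ≠ 0
      rw [hpz]; exact mul_ne_zero two_ne_zero ht0
    · show 2 + (pp z')^3 = c * (2 * pp z')
      rw [hpz]; linear_combination ht
  · refine ⟨0, by simp, ?_⟩
    show 2 * pp 0 = 0
    simp [pp]
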